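/- (Polynomial tail bound for the sub-quadratic family) For 1 < β < 2, U(x) = (1/β)·((1+x²)^{β/2} − 1), and any M > 1, setting m = (1/β)·(1 + 1/M²)^{β/2−1}, one has U(y) ≥ U(x) + m·(y−x)^β for all y ≥ x ≥ M. -/

import Mathlib

open Real

theorem stmt_18 (β : ℝ) (hβ₁ : 1 < β) (hβ₂ : β < 2) (U : ℝ → ℝ)
    (hU : ∀ x : ℝ, U x = (1 / β) * ((1 + x ^ 2) ^ (β / 2) - 1))
    (M : ℝ) (hM : 1 < M) (m : ℝ) (hm : m = (1 / β) * (1 + 1 / M ^ 2) ^ (β / 2 - 1)) :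
    ∀ x y : ℝ, M ≤ x → x ≤ y → U x + m * (y - x) ^ β ≤ U y := by
  intro x y hMx hxy
  have hβ0 : (0:ℝ) < β := by linarith
  have hx0 : (0:ℝ) < x := by linarith
  rcases eq_or_lt_of_le hxy with rfl | hlt
  · simp [Real.zero_rpow (ne_of_gt hβ0)]
  -- define g
  set g : ℝ → ℝ := fun t => U t - m * (t - x) ^ β with hg
  have hgx : g x = U x := by
    simp [hg, Real.zero_rpow (ne_of_gt hβ0)]
  -- derivative nonneg on (x, y)
  have key : ∀ t ∈ Set.Ioo x y, 0 ≤ t * (1 + t ^ 2) ^ (β / 2 - 1) - m * (β * (t - x) ^ (β - 1)) := by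
    intro t ht
    have htx : x < t := ht.1
    have ht0 : (0:ℝ) < t := lt_trans hx0 htx
    have hM0 : (0:ℝ) < M := by linarith
    have hC0 : (0:ℝ) < 1 + 1 / M ^ 2 := by positivity
    have h1 : 1 + t ^ 2 ≤ (1 + 1 / M ^ 2) * t ^ 2 := by
      have h1' : 1 ≤ t ^ 2 / M ^ 2 := by
        rw [le_div_iff₀ (by positivity)]
        nlinarith
      have e : (1 + 1 / M ^ 2) * t ^ 2 = t ^ 2 + t ^ 2 / M ^ 2 := by ring
      linarith
    have h2 : ((1 + 1 / M ^ 2) * t ^ 2) ^ (β / 2 - 1) ≤ (1 + t ^ 2) ^ (β / 2 - 1) :=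
      Real.rpow_le_rpow_of_nonpos (by positivity) h1 (by linarith)
    have h3 : ((1 + 1 / M ^ 2) * t ^ 2) ^ (β / 2 - 1)
        = (1 + 1 / M ^ 2) ^ (β / 2 - 1) * t ^ (β - 2) := by
      rw [Real.mul_rpow (le_of_lt hC0) (by positivity)]
      congr 1
      rw [← Real.rpow_natCast t 2, ← Real.rpow_mul (le_of_lt ht0)]
      norm_num
      ring_nf
    have h4 : (t - x) ^ (β - 1) ≤ t ^ (β - 1) :=
      Real.rpow_le_rpow (by linarith) (by linarith) (by linarith)
    have h5 : t * t ^ (β - 2) = t ^ (β - 1) := by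
      rw [show β - 1 = 1 + (β - 2) by ring, Real.rpow_add ht0, Real.rpow_one]
    have hmβ : m * β = (1 + 1 / M ^ 2) ^ (β / 2 - 1) := by
      rw [hm]; field_simp
    have hC1 : (0:ℝ) ≤ (1 + 1 / M ^ 2) ^ (β / 2 - 1) := le_of_lt (Real.rpow_pos_of_pos hC0 _)
    have h6 : (1 + 1 / M ^ 2) ^ (β / 2 - 1) * (t - x) ^ (β - 1)
        ≤ (1 + 1 / M ^ 2) ^ (β / 2 - 1) * t ^ (β - 1) :=
      mul_le_mul_of_nonneg_left h4 hC1
    have h7 : (1 + 1 / M ^ 2) ^ (β / 2 - 1) * t ^ (β - 1) ≤ t * (1 + t ^ 2) ^ (β / 2 - 1) := by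
      calc (1 + 1 / M ^ 2) ^ (β / 2 - 1) * t ^ (β - 1)
          = t * ((1 + 1 / M ^ 2) ^ (β / 2 - 1) * t ^ (β - 2)) := by rw [← h5]; ring
        _ = t * ((1 + 1 / M ^ 2) * t ^ 2) ^ (β / 2 - 1) := by rw [h3]
        _ ≤ t * (1 + t ^ 2) ^ (β / 2 - 1) := mul_le_mul_of_nonneg_left h2 (le_of_lt ht0)
    have h8 : m * (β * (t - x) ^ (β - 1)) = (1 + 1 / M ^ 2) ^ (β / 2 - 1) * (t - x) ^ (β - 1) := by
      rw [← hmβ]; ring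
    linarith
  -- derivative of g
  have hderiv : ∀ t ∈ Set.Ioo x y, HasDerivAt g
      (t * (1 + t ^ 2) ^ (β / 2 - 1) - m * (β * (t - x) ^ (β - 1))) t := by
    intro t ht
    have ht0 : (0:ℝ) < t := lt_trans hx0 ht.1
    have h1t : (1:ℝ) + t ^ 2 ≠ 0 := by positivity
    have hUd : HasDerivAt (fun s => (1 / β) * ((1 + s ^ 2) ^ (β / 2) - 1))
        (t * (1 + t ^ 2) ^ (β / 2 - 1)) t := by
      have hb : HasDerivAt (fun s : ℝ => 1 + s ^ 2) (2 * t) t := by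
        simpa using ((hasDerivAt_pow 2 t).const_add 1)
      have := (hb.rpow_const (p := β / 2) (Or.inl h1t)).sub_const 1
      have h2 := this.const_mul (1 / β)
      refine h2.congr_deriv ?_
      field_simp
    have hrd : HasDerivAt (fun s => m * (s - x) ^ β) (m * (β * (t - x) ^ (β - 1))) t := by
      have hb : HasDerivAt (fun s : ℝ => s - x) 1 t := (hasDerivAt_id t).sub_const x
      have := (hb.rpow_const (p := β) (Or.inl (by simp; linarith [ht.1]))).const_mul m
      refine this.congr_deriv ?_
      ring
    have : HasDerivAt g (t * (1 + t ^ 2) ^ (β / 2 - 1) - m * (β * (t - x) ^ (β - 1))) t := by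
      have := hUd.sub hrd
      refine HasDerivAt.congr_of_eventuallyEq this ?_
      filter_upwards with s
      simp [hg, hU s]
    exact this
  -- continuity of g on [x, y]
  have hcont : ContinuousOn g (Set.Icc x y) := by
    have c1 : Continuous fun t : ℝ => (1 / β) * ((1 + t ^ 2) ^ (β / 2) - 1) := by
      apply Continuous.mul continuous_const
      apply Continuous.sub _ continuous_const
      apply Continuous.rpow_const (by continuity)
      intro s; right; positivity
    have c2 : Continuous fun t : ℝ => m * (t - x) ^ β := by
      apply Continuous.mul continuous_const
      apply Continuous.rpow_const (by continuity)
      intro s; right; linarith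
    have : Continuous g := by
      have : g = fun t => (1 / β) * ((1 + t ^ 2) ^ (β / 2) - 1) - m * (t - x) ^ β := by
        funext t; simp [hg, hU t]
      rw [this]; exact c1.sub c2
    exact this.continuousOn
  have hmono : MonotoneOn g (Set.Icc x y) := by
    apply monotoneOn_of_deriv_nonneg (convex_Icc x y) hcont
    · intro t ht
      rw [interior_Icc] at ht
      exact (hderiv t ht).differentiableAt.differentiableWithinAt
    · intro t ht
      rw [interior_Icc] at ht
      rw [(hderiv t ht).deriv]
      exact key t ht
  have := hmono (Set.left_mem_Icc.2 hxy) (Set.right_mem_Icc.2 hxy) hxy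
  rw [hgx] at this
  simp only [hg] at this
  linarith
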